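/- Let T be a tilting object in a hereditary abelian category H. Then the pair (T(T), F(T)), where T(T) = {X : Ext^1(T,X) = 0} and F(T) = {Y : Hom(T,Y) = 0}, is a torsion pair in H. -/

import Mathlib

open CategoryTheory Limits

universe w v u

namespace SplitTStructuresPaper

variable {C : Type u} [Category.{v} C] [Abelian C]

/-- A torsion pair in an abelian category: `Hom(T, F) = 0` and every object admits a
short exact sequence with torsion subobject in `T` and torsion-free quotient in `F`. -/
def IsTorsionPair (T F : Set C) : Prop :=
  (∀ X ∈ T, ∀ Y ∈ F, ∀ f : X ⟶ Y, f = 0) ∧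
  ∀ Y : C, ∃ S : ShortComplex C, S.ShortExact ∧ S.X₁ ∈ T ∧ S.X₃ ∈ F ∧ Nonempty (S.X₂ ≅ Y)

section Aux

universe w' w''

open Abelian

variable (C) in
/-- The homology in degree 0 of the single complex functor to the derived category. -/
noncomputable def homologySingleZeroIso [HasDerivedCategory.{w''} C] :
    DerivedCategory.singleFunctor C 0 ⋙ DerivedCategory.homologyFunctor C 0 ≅ 𝟭 C :=
  Functor.isoWhiskerRight ((SingleFunctors.evaluation _ _ 0).mapIso
      (DerivedCategory.singleFunctorsPostcompQIso C)) (DerivedCategory.homologyFunctor C 0) ≪≫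
    Functor.associator _ _ _ ≪≫
    Functor.isoWhiskerLeft _ (DerivedCategory.homologyFunctorFactors C 0) ≪≫
    HomologicalComplex.homologyFunctorSingleIso C _ 0

variable [HasExt.{w'} C]

/-- A retraction of `Ext.mk₀`. -/
noncomputable def extToHom [HasDerivedCategory.{w''} C] {X Y : C} (α : Ext X Y 0) : X ⟶ Y :=
  (homologySingleZeroIso C).inv.app X ≫
    (DerivedCategory.homologyFunctor C 0).map
      (α.hom ≫ (shiftFunctorZero' (DerivedCategory C) ((0 : ℕ) : ℤ) (by simp)).hom.app _) ≫
    (homologySingleZeroIso C).hom.app Y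

lemma extToHom_mk₀ [HasDerivedCategory.{w''} C] {X Y : C} (f : X ⟶ Y) :
    extToHom (Ext.mk₀ f) = f := by
  dsimp [extToHom]
  rw [Ext.mk₀_hom]
  dsimp [ShiftedHom.mk₀]
  simp only [Category.assoc, Iso.inv_hom_id_app]
  simp only [Functor.id_obj, Category.comp_id]
  rw [← Functor.comp_map, NatTrans.naturality, Iso.inv_hom_id_app_assoc]
  rfl

lemma extToHom_comp_mk₀ [HasDerivedCategory.{w''} C] {X Y Z : C} (α : Ext X Y 0) (g : Y ⟶ Z) :
    extToHom (α.comp (Ext.mk₀ g) (add_zero 0)) = extToHom α ≫ g := by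
  dsimp [extToHom]
  rw [Ext.comp_hom, Ext.mk₀_hom, ShiftedHom.comp_mk₀, Category.assoc,
    NatTrans.naturality]
  dsimp only [Functor.id_map]
  rw [← Category.assoc (α.hom), Functor.map_comp]
  rw [Category.assoc, Category.assoc, ← Functor.comp_map, NatTrans.naturality]
  dsimp only [Functor.id_map]
  simp

/-- Lifting morphisms along the quotient map of a short exact sequence whose
first `Ext` group into the kernel vanishes. -/
lemma exists_lift_of_shortExact {S : ShortComplex C} (hS : S.ShortExact) (X : C)
    (h1 : Subsingleton (Ext X S.X₁ 1)) (g : X ⟶ S.X₃) :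
    ∃ u : X ⟶ S.X₂, u ≫ S.g = g := by
  letI := HasDerivedCategory.standard C
  obtain ⟨x₂, hx₂⟩ := Ext.covariant_sequence_exact₃ X hS (Ext.mk₀ g) rfl
    (Subsingleton.elim _ _)
  refine ⟨extToHom x₂, ?_⟩
  have h := extToHom_comp_mk₀ x₂ S.g
  rw [hx₂, extToHom_mk₀] at h
  exact h.symm

lemma subsingleton_ext_X₃ {S : ShortComplex C} (hS : S.ShortExact) (X : C)
    (h₂ : Subsingleton (Ext X S.X₂ 1)) (h₁ : Subsingleton (Ext X S.X₁ 2)) :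
    Subsingleton (Ext X S.X₃ 1) := by
  have h : ∀ x : Ext X S.X₃ 1, x = 0 := by
    intro x
    obtain ⟨x₂, hx₂⟩ := Ext.covariant_sequence_exact₃ X hS x rfl (Subsingleton.elim _ _)
    rw [← hx₂, Subsingleton.elim x₂ 0, Ext.zero_comp]
  exact ⟨fun a b => by rw [h a, h b]⟩

lemma subsingleton_ext_X₂ {S : ShortComplex C} (hS : S.ShortExact) (X : C) (n : ℕ)
    (h₁ : Subsingleton (Ext X S.X₁ n)) (h₃ : Subsingleton (Ext X S.X₃ n)) :
    Subsingleton (Ext X S.X₂ n) := by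
  have h : ∀ x : Ext X S.X₂ n, x = 0 := by
    intro x
    obtain ⟨x₁, hx₁⟩ := Ext.covariant_sequence_exact₂ X hS x (Subsingleton.elim _ _)
    rw [← hx₁, Subsingleton.elim x₁ 0, Ext.zero_comp]
  exact ⟨fun a b => by rw [h a, h b]⟩

lemma subsingleton_ext_of_isZero {X Z : C} (h : IsZero Z) (n : ℕ) :
    Subsingleton (Ext X Z n) := by
  have hz : ∀ x : Ext X Z n, x = 0 := by
    intro x
    rw [← Ext.comp_mk₀_id x, h.eq_of_src (𝟙 Z) 0, Ext.mk₀_zero, Ext.comp_zero]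
  exact ⟨fun a b => by rw [hz a, hz b]⟩

open ZeroObject in
/-- The `n`-fold power of an object, as iterated binary biproducts. -/
noncomputable def powObj (T : C) : ℕ → C
  | 0 => 0
  | (n + 1) => T ⊞ powObj T n

/-- The morphism out of a power determined by a family of morphisms. -/
noncomputable def powDesc (T : C) {Y : C} : ∀ n, (Fin n → (T ⟶ Y)) → (powObj T n ⟶ Y)
  | 0, _ => 0
  | (n + 1), f => biprod.desc (f 0) (powDesc T n (fun i => f i.succ))

lemma subsingleton_ext_powObj (X T : C) (h : Subsingleton (Ext X T 1)) :
    ∀ n, Subsingleton (Ext X (powObj T n) 1)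
  | 0 => subsingleton_ext_of_isZero (isZero_zero C) 1
  | (n + 1) => by
    let S : ShortComplex C := ShortComplex.mk (biprod.inl : T ⟶ T ⊞ powObj T n) biprod.snd
      (by simp)
    have sp : S.Splitting :=
      { r := biprod.fst
        s := biprod.inr
        f_r := by simp [S]
        s_g := by simp [S]
        id := by simp [S, biprod.total] }
    exact subsingleton_ext_X₂ sp.shortExact X 1 h (subsingleton_ext_powObj X T h n)

section LinearCombo

variable (k : Type w) [Field k] [Linear k C]

lemma powDesc_factors (T Y : C) : ∀ (n : ℕ) (f : Fin n → (T ⟶ Y)) (c : Fin n → k),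
    ∃ u : T ⟶ powObj T n, u ≫ powDesc T n f = ∑ i, c i • f i
  | 0, f, c => ⟨0, by simp⟩
  | (n + 1), f, c => by
    obtain ⟨u', hu'⟩ := powDesc_factors T Y n (fun i => f i.succ) (fun i => c i.succ)
    refine ⟨biprod.lift (c 0 • 𝟙 T) u', ?_⟩
    change biprod.lift (c 0 • 𝟙 T) u' ≫ biprod.desc (f 0) (powDesc T n fun i => f i.succ) = _
    rw [biprod.lift_desc, hu', Fin.sum_univ_succ]
    simp

end LinearCombo

end Aux

/-- A tilting object `T` in a hereditary abelian category `H`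
(i.e. `Ext¹(T,T) = 0`, and `Hom(T,X) = 0 = Ext¹(T,X)` imply `X = 0`) induces the torsion
pair `(T(T), F(T))` with `T(T) = {X : Ext¹(T,X) = 0}` and `F(T) = {Y : Hom(T,Y) = 0}`. -/
theorem tilting_induces_torsionPair
    (k : Type w) [Field k] [IsAlgClosed k] [Linear k C] [HasExt.{v} C]
    (hHered : ∀ X Y : C, Subsingleton (Abelian.Ext X Y 2))
    (hHomFin : ∀ X Y : C, FiniteDimensional k (X ⟶ Y))
    (T : C)
    (hRigid : Subsingleton (Abelian.Ext T T 1))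
    (hGen : ∀ X : C, (∀ f : T ⟶ X, f = 0) → Subsingleton (Abelian.Ext T X 1) → IsZero X) :
    IsTorsionPair {X : C | Subsingleton (Abelian.Ext T X 1)} {Y : C | ∀ f : T ⟶ Y, f = 0} := by
  have coimSES : ∀ {P Z : C} (e : P ⟶ Z),
      (ShortComplex.mk (kernel.ι e) (Abelian.coimage.π e)
        (cokernel.condition (kernel.ι e))).ShortExact := fun e =>
    ⟨ShortComplex.exact_of_g_is_cokernel _ (cokernelIsCokernel (kernel.ι e))⟩
  constructor
  · -- no nonzero morphisms from torsion to torsion-free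
    intro X hX Y hY f
    have hext : Subsingleton (Abelian.Ext T (Abelian.coimage f) 1) :=
      subsingleton_ext_X₃ (coimSES f) T hX (hHered T _)
    have hhom : ∀ g : T ⟶ Abelian.coimage f, g = 0 := fun g =>
      zero_of_comp_mono (Abelian.factorThruCoimage f) (hY (g ≫ Abelian.factorThruCoimage f))
    have hzero : IsZero (Abelian.coimage f) := hGen _ hhom hext
    rw [← Abelian.coimage.fac f, hzero.eq_of_src (Abelian.factorThruCoimage f) 0, comp_zero]
  · -- existence of the torsion short exact sequence
    intro Y
    haveI := hHomFin T Y
    set nn := Module.finrank k (T ⟶ Y) with hn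
    set b := Module.finBasis k (T ⟶ Y) with hb
    set e : powObj T nn ⟶ Y := powDesc T nn (fun i => b i) with he
    -- Ext¹(T, coimage e) = 0
    have hext : Subsingleton (Abelian.Ext T (Abelian.coimage e) 1) :=
      subsingleton_ext_X₃ (coimSES e) T (subsingleton_ext_powObj T T hRigid nn) (hHered T _)
    -- the short exact sequence coimage e ↪ Y ↠ coker
    set μ : Abelian.coimage e ⟶ Y := Abelian.factorThruCoimage e with hμ
    have hSE : (ShortComplex.mk μ (cokernel.π μ) (cokernel.condition μ)).ShortExact :=
      ⟨ShortComplex.exact_of_g_is_cokernel _ (cokernelIsCokernel μ)⟩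
    refine ⟨ShortComplex.mk μ (cokernel.π μ) (cokernel.condition μ),
      hSE, hext, ?_, ⟨Iso.refl Y⟩⟩
    -- Hom(T, coker μ) = 0
    intro g
    obtain ⟨u, hu⟩ := exists_lift_of_shortExact hSE T hext g
    obtain ⟨v, hv⟩ := powDesc_factors k T Y nn (fun i => b i) (fun i => b.repr u i)
    have hub : v ≫ e = u := hv.trans (Module.Basis.sum_repr b u)
    have hfac : e ≫ cokernel.π μ = 0 := by
      have h0 : Abelian.coimage.π e ≫ μ = e := Abelian.coimage.fac e
      calc e ≫ cokernel.π μ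
          = (Abelian.coimage.π e ≫ μ) ≫ cokernel.π μ := by rw [h0]
        _ = Abelian.coimage.π e ≫ (μ ≫ cokernel.π μ) := by rw [Category.assoc]
        _ = 0 := by rw [cokernel.condition, comp_zero]
    have hu' : u ≫ cokernel.π μ = g := hu
    rw [← hu', ← hub, Category.assoc, hfac, comp_zero]

end SplitTStructuresPaper
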